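/- Let A be a real d×d matrix with nonnegative entries. Then tr(exp(A)) = d if and only if the directed graph with adjacency A (edge j→i whenever A_{ij} > 0) has no directed cycle of any length, i.e., A represents a DAG. -/

import Mathlib

open Matrix

private lemma pow_entry_nonneg {d : ℕ} (A : Matrix (Fin d) (Fin d) ℝ)
    (hA : ∀ i j, 0 ≤ A i j) : ∀ n i j, 0 ≤ (A ^ n) i j := by
  intro n
  induction n with
  | zero =>
    intro i j
    simp [Matrix.one_apply]
    split <;> norm_num
  | succ n ih =>
    intro i j
    rw [pow_succ, Matrix.mul_apply]
    exact Finset.sum_nonneg fun k _ => mul_nonneg (ih i k) (hA k j)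

private lemma pow_entry_pos_iff {d : ℕ} (A : Matrix (Fin d) (Fin d) ℝ)
    (hA : ∀ i j, 0 ≤ A i j) : ∀ (n : ℕ) (a b : Fin d),
    0 < (A ^ n) b a ↔
      ∃ i : ℕ → Fin d, i 0 = a ∧ i n = b ∧ ∀ j < n, 0 < A (i (j + 1)) (i j) := by
  intro n
  induction n with
  | zero =>
    intro a b
    constructor
    · intro h
      have hba : b = a := by
        by_contra hne
        simp [Matrix.one_apply, hne] at h
      exact ⟨fun _ => a, rfl, by simp [hba], fun j hj => absurd hj (Nat.not_lt_zero j)⟩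
    · rintro ⟨i, h0, hn, _⟩
      have : b = a := hn ▸ h0
      simp [Matrix.one_apply, this]
  | succ n ih =>
    intro a b
    rw [pow_succ', Matrix.mul_apply]
    constructor
    · intro h
      obtain ⟨k, -, hk⟩ := Finset.exists_lt_of_sum_lt (by simpa using h :
        (Finset.univ.sum (fun _ : Fin d => (0:ℝ))) < ∑ k, A b k * (A ^ n) k a)
      have h1 : 0 < A b k := by
        rcases lt_or_eq_of_le (hA b k) with h' | h'
        · exact h'
        · exfalso; rw [← h'] at hk; simp at hk
      have h2 : 0 < (A ^ n) k a := by
        rcases lt_or_eq_of_le (pow_entry_nonneg A hA n k a) with h' | h'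
        · exact h'
        · exfalso; rw [← h'] at hk; simp at hk
      obtain ⟨i, h0, hn, hstep⟩ := (ih a k).1 h2
      refine ⟨fun m => if m ≤ n then i m else b, by simpa using h0, by simp, ?_⟩
      intro j hj
      rcases Nat.lt_or_ge j n with hjn | hjn
      · have : j + 1 ≤ n := hjn
        simpa [Nat.le_of_lt hjn, this] using hstep j hjn
      · have hjeq : j = n := le_antisymm (Nat.lt_succ_iff.mp hj) hjn
        subst hjeq
        simpa [Nat.lt_irrefl, hn] using h1
    · rintro ⟨i, h0, hn, hstep⟩
      have h2 : 0 < (A ^ n) (i n) a := (ih a (i n)).2 ⟨i, h0, rfl, fun j hj =>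
        hstep j (Nat.lt_succ_of_lt hj)⟩
      have h1 : 0 < A b (i n) := by
        have := hstep n (Nat.lt_succ_self n)
        rwa [hn] at this
      have hterm : 0 < A b (i n) * (A ^ n) (i n) a := mul_pos h1 h2
      calc (0:ℝ) < A b (i n) * (A ^ n) (i n) a := hterm
        _ ≤ ∑ k, A b k * (A ^ n) k a :=
          Finset.single_le_sum (fun k _ =>
            mul_nonneg (hA b k) (pow_entry_nonneg A hA n k a)) (Finset.mem_univ _)

theorem trace_exp_eq_card_iff_dag {d : ℕ} (A : Matrix (Fin d) (Fin d) ℝ)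
    (hA : ∀ i j, 0 ≤ A i j) :
    (NormedSpace.exp A).trace = d ↔
      ¬ ∃ k : ℕ, 1 ≤ k ∧ ∃ i : ℕ → Fin d, i k = i 0 ∧ ∀ j < k, 0 < A (i (j + 1)) (i j) := by
  letI : SeminormedRing (Matrix (Fin d) (Fin d) ℝ) := Matrix.linftyOpSemiNormedRing
  letI : NormedRing (Matrix (Fin d) (Fin d) ℝ) := Matrix.linftyOpNormedRing
  letI : NormedAlgebra ℝ (Matrix (Fin d) (Fin d) ℝ) := Matrix.linftyOpNormedAlgebra
  have hsum : Summable fun n : ℕ => ((n.factorial : ℝ)⁻¹) • A ^ n := by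
    exact NormedSpace.expSeries_summable' (𝕂 := ℝ) A
  -- trace as a continuous linear map
  let T : Matrix (Fin d) (Fin d) ℝ →L[ℝ] ℝ :=
    LinearMap.toContinuousLinearMap (Matrix.traceLinearMap (Fin d) ℝ ℝ)
  have htr : (NormedSpace.exp A).trace = ∑' n : ℕ, ((n.factorial : ℝ)⁻¹) * (A ^ n).trace := by
    have h1 : (NormedSpace.exp A) = ∑' n : ℕ, ((n.factorial : ℝ)⁻¹) • A ^ n := by
      rw [NormedSpace.exp_eq_tsum (𝕂 := ℝ)]
    have h2 : T (∑' n : ℕ, ((n.factorial : ℝ)⁻¹) • A ^ n) = ∑' n : ℕ, T (((n.factorial : ℝ)⁻¹) • A ^ n) :=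
      T.map_tsum hsum
    have hT : ∀ M : Matrix (Fin d) (Fin d) ℝ, T M = M.trace := fun M => rfl
    rw [h1, hT] at *
    rw [h2]
    congr 1
    funext n
    rw [hT, Matrix.trace_smul, smul_eq_mul]
  set f : ℕ → ℝ := fun n => ((n.factorial : ℝ)⁻¹) * (A ^ n).trace with hf
  have hT : ∀ M : Matrix (Fin d) (Fin d) ℝ, T M = M.trace := fun M => rfl
  have hsumf : Summable f := by
    refine (hsum.map T T.continuous).congr fun n => ?_
    show T (((n.factorial : ℝ))⁻¹ • A ^ n) = f n
    rw [hT, Matrix.trace_smul, smul_eq_mul]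
  have hfnonneg : ∀ n, 0 ≤ f n := by
    intro n
    apply mul_nonneg (by positivity)
    exact Finset.sum_nonneg fun i _ => pow_entry_nonneg A hA n i i
  have hf0 : f 0 = d := by simp [f, Matrix.trace, Matrix.diag]
  have hsplit : (∑' n, f n) = f 0 + ∑' n, f (n + 1) := hsumf.tsum_eq_zero_add
  have htail_nonneg : ∀ n, 0 ≤ f (n + 1) := fun n => hfnonneg _
  have htails : Summable fun n => f (n + 1) := (summable_nat_add_iff 1).2 hsumf
  rw [htr]
  constructor
  · -- trace = d → no cycle
    intro heq
    rintro ⟨k, hk1, i, hik, hstep⟩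
    have hdiag : 0 < (A ^ k) (i 0) (i 0) :=
      (pow_entry_pos_iff A hA k (i 0) (i 0)).2 ⟨i, rfl, hik, hstep⟩
    have htrk : 0 < (A ^ k).trace := by
      have : (A ^ k) (i 0) (i 0) ≤ (A ^ k).trace :=
        Finset.single_le_sum (fun j _ => pow_entry_nonneg A hA k j j) (Finset.mem_univ (i 0))
      linarith
    have hfk : 0 < f k := mul_pos (by positivity) htrk
    obtain ⟨k', rfl⟩ : ∃ k', k = k' + 1 := ⟨k - 1, (Nat.succ_pred_eq_of_pos hk1).symm⟩
    have htailpos : 0 < ∑' n, f (n + 1) :=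
      htails.tsum_pos htail_nonneg k' hfk
    rw [hsplit, hf0] at heq
    linarith
  · -- no cycle → trace = d
    intro hnc
    have hzero : ∀ n, f (n + 1) = 0 := by
      intro n
      have htr0 : (A ^ (n + 1)).trace = 0 := by
        by_contra h
        have hpos : 0 < (A ^ (n + 1)).trace :=
          lt_of_le_of_ne (Finset.sum_nonneg fun i _ => pow_entry_nonneg A hA _ i i)
            (Ne.symm h)
        obtain ⟨j, -, hj⟩ := Finset.exists_lt_of_sum_lt (by simpa [Matrix.trace, Matrix.diag]
          using hpos : (Finset.univ.sum (fun _ : Fin d => (0:ℝ))) < ∑ j, (A ^ (n+1)) j j)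
        obtain ⟨i, h0, hn, hstep⟩ := (pow_entry_pos_iff A hA (n + 1) j j).1 hj
        exact hnc ⟨n + 1, Nat.succ_le_succ (Nat.zero_le n), i, by rw [hn, h0], hstep⟩
      simp [f, htr0]
    rw [hsplit, hf0]
    have h0 : (fun n => f (n + 1)) = fun _ => (0:ℝ) := funext hzero
    rw [h0, tsum_zero, add_zero]
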